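/- Let 0 < R₁ < R₀ < R be real numbers, let S ⊂ ℂ be a finite set with R₁ < |ξ₀| < R₀ for every ξ₀ ∈ S, and let F be holomorphic on {ξ ∈ ℂ : |ξ| < R} \ S, such that every ξ₀ ∈ S is a simple pole of F: the function ξ ↦ (ξ − ξ₀)·F(ξ) extends holomorphically across ξ₀ with value ρ(ξ₀) there. Let (c_D)_{D∈ℕ} be the Taylor coefficients of F at 0 and let M := sup_{|ξ| = R₀} |F(ξ)|. Then for every D ∈ ℕ: |c_D + Σ_{ξ₀∈S} ρ(ξ₀)·ξ₀^{−D−1}| ≤ M·R₀^{−D}. -/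

import Mathlib

open Complex Metric Filter Set Finset

lemma myHasSum_finsetSum {α β : Type*} [AddCommMonoid β] [TopologicalSpace β]
    [ContinuousAdd β] {s : Finset α} {f : α → ℕ → β} {a : α → β}
    (h : ∀ i ∈ s, HasSum (f i) (a i)) :
    HasSum (fun n => ∑ i ∈ s, f i n) (∑ i ∈ s, a i) := by
  classical
  induction s using Finset.induction with
  | empty => simpa using hasSum_zero
  | insert x s hx ih =>
      simp only [Finset.sum_insert hx]
      exact (h x (Finset.mem_insert_self x s)).add
        (ih fun i hi => h i (Finset.mem_insert_of_mem hi))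

lemma myCircleIntegral_finsetSum {α : Type*} (s : Finset α) (f : α → ℂ → ℂ) (c : ℂ) (R : ℝ)
    (h : ∀ i ∈ s, CircleIntegrable (f i) c R) :
    (∮ z in C(c, R), ∑ i ∈ s, f i z) = ∑ i ∈ s, ∮ z in C(c, R), f i z := by
  simp only [circleIntegral, deriv_circleMap, smul_eq_mul, Finset.mul_sum]
  exact intervalIntegral.integral_finset_sum (fun i hi => by simpa using (h i hi).out)

/-- Removable singularities over a finite set. -/
lemma myRemovable {U : Set ℂ} (S : Finset ℂ) (hU : IsOpen U) (hSU : ↑S ⊆ U)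
    (f : ℂ → ℂ) (hf : DifferentiableOn ℂ f (U \ ↑S))
    (h0 : ∀ c ∈ S, Tendsto (fun z => (z - c) * f z) (nhdsWithin c {c}ᶜ) (nhds 0)) :
    ∃ g : ℂ → ℂ, DifferentiableOn ℂ g U ∧ Set.EqOn g f (U \ ↑S) := by
  classical
  induction S using Finset.induction generalizing U with
  | empty => exact ⟨f, by simpa using hf, fun z _ => rfl⟩
  | insert a S hx ih =>
      have hU' : IsOpen (U \ {a}) := hU.sdiff isClosed_singleton
      have hSU' : ↑S ⊆ U \ {a} := by
        intro x hxS
        have hx' : x ∈ (insert a S : Finset ℂ) := Finset.mem_insert_of_mem hxS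
        exact ⟨hSU (by exact_mod_cast hx'), fun hxa => hx (by simp at hxa; exact hxa ▸ hxS)⟩
      have hf' : DifferentiableOn ℂ f ((U \ {a}) \ ↑S) := by
        apply hf.mono; intro z hz
        refine ⟨hz.1.1, ?_⟩
        simp only [Finset.coe_insert, Set.mem_insert_iff] at *
        rintro (rfl | hzS)
        · exact hz.1.2 rfl
        · exact hz.2 hzS
      obtain ⟨g, hg, hgf⟩ := ih hU' hSU' hf'
        (fun c hc => h0 c (Finset.mem_insert_of_mem hc))
      -- near a, g = f (off a)
      have haU : a ∈ U := hSU (by simp)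
      have hmem : {a}ᶜ ∩ (U \ ↑S) ∈ nhdsWithin a {a}ᶜ :=
        inter_mem_nhdsWithin _ ((hU.sdiff S.finite_toSet.isClosed).mem_nhds
          ⟨haU, fun hzS => hx (by simpa using hzS)⟩)
      have hev : ∀ᶠ z in nhdsWithin a {a}ᶜ, g z = f z := by
        filter_upwards [hmem] with z hz
        exact hgf ⟨⟨hz.2.1, hz.1⟩, hz.2.2⟩
      have hg0 : Tendsto (fun z => (z - a) * g z) (nhdsWithin a {a}ᶜ) (nhds 0) := by
        apply Tendsto.congr' _ (h0 a (Finset.mem_insert_self a S))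
        filter_upwards [hev] with z hz using by rw [hz]
      -- littleO
      have ho : (fun z => g z - g a) =o[nhdsWithin a {a}ᶜ] fun z => (z - a)⁻¹ := by
        rw [Asymptotics.isLittleO_iff_tendsto']
        · have hsub : Tendsto (fun z : ℂ => z - a) (nhdsWithin a {a}ᶜ) (nhds 0) := by
            have h' : Tendsto (fun z : ℂ => z - a) (nhds a) (nhds (a - a)) :=
              (continuous_id.sub continuous_const).tendsto a
            rw [sub_self] at h'
            exact h'.mono_left nhdsWithin_le_nhds
          have : Tendsto (fun z => (z - a) * g a) (nhdsWithin a {a}ᶜ) (nhds 0) := by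
            simpa using hsub.mul (tendsto_const_nhds (x := g a))
          have h2 := hg0.sub this
          rw [sub_zero] at h2
          apply h2.congr'
          filter_upwards [self_mem_nhdsWithin] with z hz
          have : z - a ≠ 0 := sub_ne_zero.2 hz
          field_simp
        · filter_upwards [self_mem_nhdsWithin] with z hz h
          exact absurd (inv_eq_zero.1 h) (sub_ne_zero.2 hz)
      refine ⟨Function.update g a (limUnder (nhdsWithin a {a}ᶜ) g), ?_, ?_⟩
      · exact Complex.differentiableOn_update_limUnder_of_isLittleO (hU.mem_nhds haU)
          (by simpa using hg) ho
      · intro z hz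
        have hza : z ≠ a := fun h => hz.2 (by simp [h])
        rw [Function.update_of_ne hza]
        apply hgf
        refine ⟨⟨hz.1, hza⟩, fun hzS => hz.2 (by simpa using Or.inr hzS)⟩

lemma myHasFPowerSeriesOnBall (a : ℕ → ℂ) (f : ℂ → ℂ) (r : NNReal) (hr : 0 < r)
    (h : ∀ ξ : ℂ, ‖ξ‖ < (r : ℝ) → HasSum (fun n : ℕ => a n * ξ ^ n) (f ξ)) :
    HasFPowerSeriesOnBall f (FormalMultilinearSeries.ofScalars ℂ a) 0 r := by
  constructor
  · -- radius
    apply ENNReal.le_of_forall_nnreal_lt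
    intro r' hr'
    rw [ENNReal.coe_lt_coe] at hr'
    have hsum : Summable (fun n : ℕ => a n * ((r' : ℝ) : ℂ) ^ n) := by
      refine (h ((r' : ℝ) : ℂ) ?_).summable
      simpa using hr'
    have ht : Tendsto (fun n : ℕ => ‖FormalMultilinearSeries.ofScalars ℂ a n‖ * (r' : ℝ) ^ n)
        atTop (nhds 0) := by
      have := (hsum.tendsto_atTop_zero).norm
      rw [norm_zero] at this
      apply this.congr
      intro n
      rw [FormalMultilinearSeries.ofScalars_norm, norm_mul, norm_pow]
      congr 1
      rw [Complex.norm_real, Real.norm_eq_abs, _root_.abs_of_nonneg r'.coe_nonneg]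
    exact (FormalMultilinearSeries.ofScalars ℂ a).le_radius_of_tendsto ht
  · exact_mod_cast hr
  · intro y hy
    rw [mem_emetric_ball_zero_iff, enorm_eq_nnnorm, ENNReal.coe_lt_coe, ← NNReal.coe_lt_coe, coe_nnnorm] at hy
    rw [zero_add]
    have := h y hy
    simpa only [FormalMultilinearSeries.ofScalars_apply_eq, smul_eq_mul] using this

lemma myCircleIntegral_finsetSum' {α : Type*} (s : Finset α) (f : α → ℂ → ℂ) (c : ℂ) (R : ℝ)
    (h : ∀ i ∈ s, CircleIntegrable (f i) c R) :
    (∮ z in C(c, R), ∑ i ∈ s, f i z) = ∑ i ∈ s, ∮ z in C(c, R), f i z := by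
  simp only [circleIntegral, deriv_circleMap, smul_eq_mul, Finset.mul_sum]
  exact intervalIntegral.integral_finset_sum (fun i hi => by simpa using (h i hi).out)

lemma myKeyIntegral (R₀ : ℝ) (hR₀ : 0 < R₀) (a : ℂ) (ha : a ≠ 0)
    (haR : ‖a‖ < R₀) (D : ℕ) :
    (∮ z in C(0, R₀), z ^ (-(D : ℤ) - 1) * (z - a)⁻¹) = 0 := by
  set m : ℕ := D + 1 with hm
  have hexp : (-(D : ℤ) - 1) = -(m : ℤ) := by push_cast [hm]; ring
  rw [hexp]
  -- the algebraic identity on the sphere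
  have hid : Set.EqOn (fun z : ℂ => z ^ (-(m : ℤ)) * (z - a)⁻¹)
      (fun z : ℂ => a ^ (-(m : ℤ)) * (z - a)⁻¹ -
        ∑ k ∈ Finset.range m, a ^ (-1 - (k : ℤ)) * z ^ ((k : ℤ) - m)) (sphere (0:ℂ) R₀) := by
    intro z hz
    have hzR : ‖z‖ = R₀ := by simpa [Complex.dist_eq] using hz
    have hz0 : z ≠ 0 := by
      intro h; rw [h] at hzR; simp at hzR; exact hR₀.ne hzR
    have hza : z - a ≠ 0 := by
      intro h
      rw [sub_eq_zero] at h
      rw [h] at hzR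
      exact (lt_irrefl _ (hzR ▸ haR))
    have hzm : (z : ℂ) ^ m ≠ 0 := pow_ne_zero _ hz0
    have ham : (a : ℂ) ^ m ≠ 0 := pow_ne_zero _ ha
    -- rewrite the sum
    have hsum : ∑ k ∈ Finset.range m, a ^ (-1 - (k : ℤ)) * z ^ ((k : ℤ) - m)
        = (z ^ m * a ^ m)⁻¹ * ((z ^ m - a ^ m) * (z - a)⁻¹) := by
      have hgeom : (∑ k ∈ Finset.range m, z ^ k * a ^ (m - 1 - k)) * (z - a) = z ^ m - a ^ m :=
        geom_sum₂_mul z a m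
      rw [← hgeom]
      rw [mul_assoc, mul_inv_cancel₀ hza, mul_one, Finset.mul_sum]
      apply Finset.sum_congr rfl
      intro k hk
      rw [Finset.mem_range] at hk
      have h1 : z ^ m = z ^ (m - k) * z ^ k := by
        rw [← pow_add]; congr 1; omega
      have h2 : a ^ m = a ^ (k + 1) * a ^ (m - 1 - k) := by
        rw [← pow_add]; congr 1; omega
      have e1 : a ^ (-1 - (k : ℤ)) = (a ^ (k + 1))⁻¹ := by
        rw [← zpow_natCast a (k + 1), ← zpow_neg]
        congr 1; push_cast; ring
      have e2 : z ^ ((k : ℤ) - m) = (z ^ (m - k))⁻¹ := by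
        rw [← zpow_natCast z (m - k), ← zpow_neg]
        congr 1
        have : ((m - k : ℕ) : ℤ) = (m : ℤ) - k := by omega
        rw [this]; ring
      rw [e1, e2, h1, h2]
      field_simp
    simp only
    rw [hsum]
    have em : z ^ (-(m : ℤ)) = (z ^ m)⁻¹ := by rw [← zpow_natCast z m, ← zpow_neg]
    have em' : a ^ (-(m : ℤ)) = (a ^ m)⁻¹ := by rw [← zpow_natCast a m, ← zpow_neg]
    rw [em, em']
    field_simp
    ring
  rw [circleIntegral.integral_congr hR₀.le hid]
  -- integrability of the two pieces
  have hint1 : CircleIntegrable (fun z : ℂ => a ^ (-(m : ℤ)) * (z - a)⁻¹) 0 R₀ := by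
    apply ContinuousOn.circleIntegrable hR₀.le
    apply continuousOn_const.mul
    apply ContinuousOn.inv₀ (continuousOn_id.sub continuousOn_const)
    intro z hz
    have hzR : ‖z‖ = R₀ := by simpa [Complex.dist_eq] using hz
    intro h
    simp only [Pi.sub_apply, id_eq] at h
    rw [sub_eq_zero] at h
    rw [h] at hzR
    exact (lt_irrefl _ (hzR ▸ haR))
  have hint2 : ∀ k ∈ Finset.range m,
      CircleIntegrable (fun z : ℂ => a ^ (-1 - (k : ℤ)) * z ^ ((k : ℤ) - m)) 0 R₀ := by
    intro k _
    apply ContinuousOn.circleIntegrable hR₀.le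
    apply continuousOn_const.mul
    apply ContinuousOn.zpow₀ continuousOn_id
    intro z hz
    left
    have hzR : ‖z‖ = R₀ := by simpa [Complex.dist_eq] using hz
    intro h; simp only [id_eq] at h; rw [h] at hzR; simp at hzR; exact hR₀.ne hzR
  have hint2' : CircleIntegrable
      (fun z : ℂ => ∑ k ∈ Finset.range m, a ^ (-1 - (k : ℤ)) * z ^ ((k : ℤ) - m)) 0 R₀ := by
    apply ContinuousOn.circleIntegrable hR₀.le
    apply continuousOn_finset_sum
    intro k _
    apply continuousOn_const.mul
    apply ContinuousOn.zpow₀ continuousOn_id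
    intro z hz
    left
    have hzR : ‖z‖ = R₀ := by simpa [Complex.dist_eq] using hz
    intro h; simp only [id_eq] at h; rw [h] at hzR; simp at hzR; exact hR₀.ne hzR
  rw [circleIntegral.integral_sub hint1 hint2']
  rw [circleIntegral.integral_const_mul]
  rw [myCircleIntegral_finsetSum' _ _ _ _ hint2]
  have hmem : a ∈ ball (0:ℂ) R₀ := by simpa [Complex.dist_eq] using haR
  rw [circleIntegral.integral_sub_inv_of_mem_ball hmem]
  -- compute the sum of integrals
  have hzpow : ∀ n : ℤ, (∮ z in C((0:ℂ), R₀), z ^ n) = ∮ z in C((0:ℂ), R₀), (z - 0) ^ n := by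
    intro n; congr 1; ext z; rw [sub_zero]
  have hsumint : ∑ k ∈ Finset.range m,
      (∮ z in C((0:ℂ), R₀), a ^ (-1 - (k : ℤ)) * z ^ ((k : ℤ) - m))
      = a ^ (-1 - (D : ℤ)) * (2 * Real.pi * I) := by
    rw [hm, Finset.sum_range_succ]
    have hzero : ∀ k ∈ Finset.range D,
        (∮ z in C((0:ℂ), R₀), a ^ (-1 - (k : ℤ)) * z ^ ((k : ℤ) - m)) = 0 := by
      intro k hk
      rw [Finset.mem_range] at hk
      rw [circleIntegral.integral_const_mul, hzpow]
      rw [circleIntegral.integral_sub_zpow_of_ne (by omega) 0 0 R₀, mul_zero]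
    rw [Finset.sum_congr rfl hzero, Finset.sum_const, smul_zero, zero_add]
    rw [circleIntegral.integral_const_mul]
    have : ((D : ℤ) - m) = -1 := by rw [hm]; push_cast; ring
    rw [this, hzpow]
    have h0mem : (0:ℂ) ∈ ball (0:ℂ) R₀ := by simpa using hR₀
    have : (∮ z in C((0:ℂ), R₀), (z - 0) ^ (-1 : ℤ)) = 2 * Real.pi * I := by
      rw [← circleIntegral.integral_sub_inv_of_mem_ball h0mem]
      congr 1; ext z; rw [zpow_neg_one]
    rw [this]
  rw [hsumint]
  have : a ^ (-(m : ℤ)) = a ^ (-1 - (D : ℤ)) := by congr 1; rw [hm]; push_cast; ring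
  rw [this, sub_self]

/-- If `F` is holomorphic on the disk `|ξ| < R` away from a finite set `S` of simple poles
lying in the annulus `R₁ < |ξ| < R₀` (with residues `ρ(ξ₀)`), `(c_D)` are the Taylor
coefficients of `F` at `0`, and `M` bounds `|F|` on the circle `|ξ| = R₀`, then
`|c_D + ∑_{ξ₀ ∈ S} ρ(ξ₀) ξ₀^{-D-1}| ≤ M R₀^{-D}` for every `D ∈ ℕ`. -/
theorem coeff_approx_by_polar_parts
    (R R₀ R₁ : ℝ) (h1 : 0 < R₁) (h2 : R₁ < R₀) (h3 : R₀ < R)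
    (S : Finset ℂ) (hS : ∀ ξ₀ ∈ S, R₁ < ‖ξ₀‖ ∧ ‖ξ₀‖ < R₀)
    (F : ℂ → ℂ) (ρ : ℂ → ℂ)
    (hF : DifferentiableOn ℂ F ({ξ : ℂ | ‖ξ‖ < R} \ ↑S))
    (hpole : ∀ ξ₀ ∈ S,
      Filter.Tendsto (fun ξ : ℂ => (ξ - ξ₀) * F ξ) (nhdsWithin ξ₀ {ξ₀}ᶜ) (nhds (ρ ξ₀)))
    (c : ℕ → ℂ)
    (hc : ∀ ξ : ℂ, ‖ξ‖ < R₁ → HasSum (fun D : ℕ => c D * ξ ^ D) (F ξ))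
    (M : ℝ) (hM : ∀ ξ : ℂ, ‖ξ‖ = R₀ → ‖F ξ‖ ≤ M)
    (D : ℕ) :
    ‖c D + ∑ ξ₀ ∈ S, ρ ξ₀ * ξ₀ ^ (-(D : ℤ) - 1)‖ ≤ M * R₀ ^ (-(D : ℤ)) := by
  have hR₀ : 0 < R₀ := h1.trans h2
  have hR : 0 < R := hR₀.trans h3
  set U : Set ℂ := Metric.ball (0 : ℂ) R with hU
  have hmemU : ∀ z : ℂ, ‖z‖ < R → z ∈ U := by
    intro z hz; simp only [hU, Metric.mem_ball, Complex.dist_eq, sub_zero]; exact hz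
  have hUeq : {ξ : ℂ | ‖ξ‖ < R} = U := by
    ext ξ; simp [hU, Metric.mem_ball, Complex.dist_eq]
  rw [hUeq] at hF
  have hSU : ↑S ⊆ U := by
    intro ξ₀ hξ₀
    exact hmemU ξ₀ ((hS ξ₀ (by exact_mod_cast hξ₀)).2.trans h3)
  have hS0 : ∀ ξ₀ ∈ S, ξ₀ ≠ 0 := by
    intro ξ₀ hξ₀ h
    have := (hS ξ₀ hξ₀).1
    rw [h] at this; simp at this; exact absurd (h1.trans this) (lt_irrefl 0)
  set P : ℂ → ℂ := fun z => ∑ ξ₀ ∈ S, ρ ξ₀ * (z - ξ₀)⁻¹ with hPdef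
  set G : ℂ → ℂ := fun z => F z - P z with hGdef
  have hPdiff : DifferentiableOn ℂ P (U \ ↑S) := by
    apply DifferentiableOn.fun_sum
    intro ξ₀ hξ₀
    apply (differentiableOn_const _).mul
    apply DifferentiableOn.inv (differentiableOn_id.sub (differentiableOn_const _))
    intro z hz
    exact sub_ne_zero.2 (fun h => hz.2 (by rw [h]; exact_mod_cast hξ₀))
  have hGdiff : DifferentiableOn ℂ G (U \ ↑S) := hF.sub hPdiff
  have hG0 : ∀ ξ₀ ∈ S, Tendsto (fun z => (z - ξ₀) * G z) (nhdsWithin ξ₀ {ξ₀}ᶜ) (nhds 0) := by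
    intro ξ₀ hξ₀
    have hP : Tendsto (fun z => (z - ξ₀) * P z) (nhdsWithin ξ₀ {ξ₀}ᶜ) (nhds (ρ ξ₀)) := by
      have heq : ∀ z : ℂ, (z - ξ₀) * P z = ∑ ξ₁ ∈ S, (z - ξ₀) * (ρ ξ₁ * (z - ξ₁)⁻¹) := by
        intro z; rw [hPdef]; exact Finset.mul_sum _ _ _
      simp only [heq]
      have hlim : (ρ ξ₀ : ℂ) = ∑ ξ₁ ∈ S, (if ξ₁ = ξ₀ then ρ ξ₀ else 0) := by
        rw [Finset.sum_ite_eq' S ξ₀ (fun _ => ρ ξ₀)]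
        simp [hξ₀]
      rw [hlim]
      apply tendsto_finset_sum
      intro ξ₁ hξ₁
      by_cases hne : ξ₁ = ξ₀
      · subst hne
        simp only [if_pos rfl]
        apply Tendsto.congr' _ (tendsto_const_nhds (x := ρ ξ₁))
        filter_upwards [self_mem_nhdsWithin] with z hz
        have : z - ξ₁ ≠ 0 := sub_ne_zero.2 hz
        field_simp
      · simp only [if_neg hne]
        have hsub : Tendsto (fun z : ℂ => z - ξ₀) (nhdsWithin ξ₀ {ξ₀}ᶜ) (nhds 0) := by
          have h' : Tendsto (fun z : ℂ => z - ξ₀) (nhds ξ₀) (nhds (ξ₀ - ξ₀)) :=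
            (continuous_id.sub continuous_const).tendsto ξ₀
          rw [sub_self] at h'
          exact h'.mono_left nhdsWithin_le_nhds
        have hcont : Tendsto (fun z : ℂ => ρ ξ₁ * (z - ξ₁)⁻¹) (nhdsWithin ξ₀ {ξ₀}ᶜ)
            (nhds (ρ ξ₁ * (ξ₀ - ξ₁)⁻¹)) := by
          apply Tendsto.mono_left _ nhdsWithin_le_nhds
          apply Tendsto.const_mul
          apply Tendsto.inv₀ ((continuous_id.sub continuous_const).tendsto ξ₀)
          intro h
          exact hne (sub_eq_zero.1 h).symm
        simpa using hsub.mul hcont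
    have hlim := (hpole ξ₀ hξ₀).sub hP
    rw [sub_self] at hlim
    apply Tendsto.congr _ hlim
    intro z
    rw [hGdef]
    ring
  obtain ⟨g, hg, hgf⟩ := myRemovable S Metric.isOpen_ball hSU G hGdiff hG0
  set b : ℕ → ℂ := fun n => c n + ∑ ξ₀ ∈ S, ρ ξ₀ * ξ₀ ^ (-(n : ℤ) - 1) with hbdef
  have hcoe1 : ((R₁.toNNReal : ℝ)) = R₁ := Real.coe_toNNReal _ h1.le
  have hcoe0 : ((R₀.toNNReal : ℝ)) = R₀ := Real.coe_toNNReal _ hR₀.le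
  -- power series of g at 0 with coefficients b, on ball of radius R₁
  have hb : ∀ ξ : ℂ, ‖ξ‖ < (R₁.toNNReal : ℝ) → HasSum (fun n : ℕ => b n * ξ ^ n) (g ξ) := by
    intro ξ hξ
    rw [hcoe1] at hξ
    have hξU : ξ ∈ U \ ↑S := by
      constructor
      · exact hmemU ξ (hξ.trans (h2.trans h3))
      · intro hmem
        have := (hS ξ (by exact_mod_cast hmem)).1
        exact absurd (hξ.trans this) (lt_irrefl _)
    rw [hgf hξU]
    have hterm : ∀ ξ₀ ∈ S, HasSum (fun n : ℕ => (ρ ξ₀ * ξ₀ ^ (-(n : ℤ) - 1)) * ξ ^ n)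
        (ρ ξ₀ * (ξ₀ - ξ)⁻¹) := by
      intro ξ₀ hξ₀
      have hξ₀0 : ξ₀ ≠ 0 := hS0 ξ₀ hξ₀
      have habs : 0 < ‖ξ₀‖ := h1.trans (hS ξ₀ hξ₀).1
      have hlt : ‖ξ * ξ₀⁻¹‖ < 1 := by
        rw [norm_mul, norm_inv, ← div_eq_mul_inv, div_lt_one habs]
        exact hξ.trans (hS ξ₀ hξ₀).1
      have hgeo := (hasSum_geometric_of_norm_lt_one hlt).mul_left (ρ ξ₀ * ξ₀⁻¹)
      have hval : (ρ ξ₀ * ξ₀⁻¹) * (1 - ξ * ξ₀⁻¹)⁻¹ = ρ ξ₀ * (ξ₀ - ξ)⁻¹ := by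
        rw [mul_assoc, ← mul_inv]
        congr 2
        field_simp
      rw [hval] at hgeo
      have hfun : (fun n : ℕ => (ρ ξ₀ * ξ₀⁻¹) * (ξ * ξ₀⁻¹) ^ n)
          = fun n : ℕ => (ρ ξ₀ * ξ₀ ^ (-(n : ℤ) - 1)) * ξ ^ n := by
        funext n
        have e1 : ξ₀ ^ (-(n : ℤ) - 1) = (ξ₀ ^ (n + 1))⁻¹ := by
          rw [← zpow_natCast ξ₀ (n + 1), ← zpow_neg]
          congr 1; push_cast; ring
        rw [e1, mul_pow, inv_pow, pow_succ, mul_inv]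
        ring
      rwa [hfun] at hgeo
    have hsumS := myHasSum_finsetSum hterm
    have htot := (hc ξ hξ).add hsumS
    have hfun2 : (fun n : ℕ => c n * ξ ^ n + ∑ ξ₀ ∈ S, (ρ ξ₀ * ξ₀ ^ (-(n : ℤ) - 1)) * ξ ^ n)
        = fun n : ℕ => b n * ξ ^ n := by
      funext n
      rw [hbdef]
      simp only [add_mul, Finset.sum_mul]
    rw [hfun2] at htot
    have hval2 : F ξ + ∑ ξ₀ ∈ S, ρ ξ₀ * (ξ₀ - ξ)⁻¹ = G ξ := by
      rw [hGdef, hPdef]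
      simp only
      have hneg : ∑ ξ₀ ∈ S, ρ ξ₀ * (ξ₀ - ξ)⁻¹ = -∑ ξ₀ ∈ S, ρ ξ₀ * (ξ - ξ₀)⁻¹ := by
        rw [← Finset.sum_neg_distrib]
        apply Finset.sum_congr rfl
        intro ξ₀ _
        rw [← neg_sub ξ ξ₀, inv_neg]
        ring
      rw [hneg]
      ring
    rwa [hval2] at htot
  have hps1 : HasFPowerSeriesOnBall g (FormalMultilinearSeries.ofScalars ℂ b) 0 R₁.toNNReal :=
    myHasFPowerSeriesOnBall b g R₁.toNNReal (Real.toNNReal_pos.2 h1) hb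
  have hgball : DifferentiableOn ℂ g (Metric.closedBall (0 : ℂ) (R₀.toNNReal : ℝ)) := by
    apply hg.mono
    rw [hcoe0]
    intro z hz
    simp only [Metric.mem_closedBall] at hz
    simp only [hU, Metric.mem_ball]
    exact lt_of_le_of_lt hz h3
  have hps2 : HasFPowerSeriesOnBall g (cauchyPowerSeries g 0 R₀.toNNReal) 0 R₀.toNNReal :=
    hgball.hasFPowerSeriesOnBall (Real.toNNReal_pos.2 hR₀)
  have heq : FormalMultilinearSeries.ofScalars ℂ b = cauchyPowerSeries g 0 R₀.toNNReal :=
    hps1.hasFPowerSeriesAt.eq_formalMultilinearSeries hps2.hasFPowerSeriesAt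
  -- extract coefficient D
  have hcoeff : b D = (2 * Real.pi * I : ℂ)⁻¹ •
      ∮ z in C(0, (R₀.toNNReal : ℝ)), (1 / (z - 0)) ^ D • (z - 0)⁻¹ • g z := by
    have h' := congrArg (fun (m : ContinuousMultilinearMap ℂ (fun _ : Fin D => ℂ) ℂ) =>
      m (fun _ => (1 : ℂ))) (congrFun heq D)
    rw [FormalMultilinearSeries.ofScalars_apply_eq] at h'
    rw [cauchyPowerSeries_apply] at h'
    simpa using h'
  rw [hcoe0] at hcoeff
  simp only [sub_zero, one_div, smul_eq_mul] at hcoeff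
  -- replace g by F in the integral
  have hsphere : ∀ z : ℂ, z ∈ sphere (0 : ℂ) R₀ → ‖z‖ = R₀ := by
    intro z hz; simpa [Complex.dist_eq] using hz
  have hsphereUS : ∀ z : ℂ, z ∈ sphere (0 : ℂ) R₀ → z ∈ U \ ↑S := by
    intro z hz
    have hzR := hsphere z hz
    constructor
    · exact hmemU z (by rw [hzR]; exact h3)
    · intro hmem
      have := (hS z (by exact_mod_cast hmem)).2
      rw [hzR] at this; exact absurd this (lt_irrefl _)
  have hz0 : ∀ z : ℂ, z ∈ sphere (0 : ℂ) R₀ → z ≠ 0 := by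
    intro z hz h
    have := hsphere z hz
    rw [h] at this; simp at this; exact hR₀.ne this
  have hzS : ∀ z : ℂ, z ∈ sphere (0 : ℂ) R₀ → ∀ ξ₀ ∈ S, z - ξ₀ ≠ 0 := by
    intro z hz ξ₀ hξ₀ h
    rw [sub_eq_zero] at h
    have := (hS ξ₀ hξ₀).2
    rw [← h] at this
    rw [hsphere z hz] at this
    exact absurd this (lt_irrefl _)
  have hEq2 : Set.EqOn (fun z : ℂ => (z⁻¹) ^ D * (z⁻¹ * g z))
      (fun z : ℂ => (z⁻¹) ^ D * (z⁻¹ * F z) -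
        ∑ ξ₀ ∈ S, ρ ξ₀ * ((z⁻¹) ^ D * (z⁻¹ * (z - ξ₀)⁻¹))) (sphere (0 : ℂ) R₀) := by
    intro z hz
    simp only
    rw [hgf (hsphereUS z hz), hGdef, hPdef]
    simp only
    rw [mul_sub, mul_sub, Finset.mul_sum, Finset.mul_sum]
    congr 1
    apply Finset.sum_congr rfl
    intro ξ₀ _
    ring
  -- integrability
  have hcontzpow : ContinuousOn (fun z : ℂ => (z⁻¹) ^ D * z⁻¹) (sphere (0 : ℂ) R₀) := by
    have hinv : ContinuousOn (fun z : ℂ => z⁻¹) (sphere (0 : ℂ) R₀) :=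
      ContinuousOn.inv₀ continuousOn_id (fun z hz => by simpa using hz0 z hz)
    exact (hinv.pow D).mul hinv
  have hi1 : CircleIntegrable (fun z : ℂ => (z⁻¹) ^ D * (z⁻¹ * F z)) 0 R₀ := by
    apply ContinuousOn.circleIntegrable hR₀.le
    have hFc : ContinuousOn F (sphere (0 : ℂ) R₀) :=
      (hF.continuousOn).mono (fun z hz => hsphereUS z hz)
    have := hcontzpow.mul hFc
    apply this.congr
    intro z _
    simp only [Pi.mul_apply]
    ring
  have hiterm : ∀ ξ₀ ∈ S,
      CircleIntegrable (fun z : ℂ => ρ ξ₀ * ((z⁻¹) ^ D * (z⁻¹ * (z - ξ₀)⁻¹))) 0 R₀ := by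
    intro ξ₀ hξ₀
    apply ContinuousOn.circleIntegrable hR₀.le
    apply continuousOn_const.mul
    have hinvz : ContinuousOn (fun z : ℂ => (z - ξ₀)⁻¹) (sphere (0 : ℂ) R₀) := by
      apply ContinuousOn.inv₀ (continuousOn_id.sub continuousOn_const)
      intro z hz
      simpa using hzS z hz ξ₀ hξ₀
    have := hcontzpow.mul hinvz
    apply this.congr
    intro z _
    simp only [Pi.mul_apply]
    ring
  have hi2 : CircleIntegrable
      (fun z : ℂ => ∑ ξ₀ ∈ S, ρ ξ₀ * ((z⁻¹) ^ D * (z⁻¹ * (z - ξ₀)⁻¹))) 0 R₀ := by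
    apply ContinuousOn.circleIntegrable hR₀.le
    apply continuousOn_finset_sum
    intro ξ₀ hξ₀
    apply continuousOn_const.mul
    have hinvz : ContinuousOn (fun z : ℂ => (z - ξ₀)⁻¹) (sphere (0 : ℂ) R₀) := by
      apply ContinuousOn.inv₀ (continuousOn_id.sub continuousOn_const)
      intro z hz
      simpa using hzS z hz ξ₀ hξ₀
    have := hcontzpow.mul hinvz
    apply this.congr
    intro z _
    simp only [Pi.mul_apply]
    ring
  -- each polar integral vanishes
  have hpolar0 : ∀ ξ₀ ∈ S,
      (∮ z in C(0, R₀), ρ ξ₀ * ((z⁻¹) ^ D * (z⁻¹ * (z - ξ₀)⁻¹))) = 0 := by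
    intro ξ₀ hξ₀
    rw [circleIntegral.integral_const_mul]
    have hfe : (fun z : ℂ => (z⁻¹) ^ D * (z⁻¹ * (z - ξ₀)⁻¹))
        = fun z : ℂ => z ^ (-(D : ℤ) - 1) * (z - ξ₀)⁻¹ := by
      funext z
      by_cases hz : z = 0
      · subst hz
        rw [zero_zpow _ (by omega)]
        simp
      · have hzz : z ^ (-(D : ℤ) - 1) = (z⁻¹) ^ D * z⁻¹ := by
          rw [show (-(D : ℤ) - 1) = -(D : ℤ) + (-1) by ring, zpow_add₀ hz, zpow_neg,
            zpow_natCast, zpow_neg_one, ← inv_pow]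
        rw [hzz]
        ring
    rw [hfe, myKeyIntegral R₀ hR₀ ξ₀ (hS0 ξ₀ hξ₀) (hS ξ₀ hξ₀).2 D, mul_zero]
  have hintF : (∮ z in C(0, R₀), (z⁻¹) ^ D * (z⁻¹ * g z))
      = ∮ z in C(0, R₀), (z⁻¹) ^ D * (z⁻¹ * F z) := by
    rw [circleIntegral.integral_congr hR₀.le hEq2]
    rw [circleIntegral.integral_sub hi1 hi2]
    rw [myCircleIntegral_finsetSum' S _ 0 R₀ hiterm]
    rw [Finset.sum_congr rfl hpolar0, Finset.sum_const, smul_zero, sub_zero]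
  rw [hintF] at hcoeff
  -- final bound
  have hMnn : 0 ≤ M := by
    have := hM (R₀ : ℂ) (by simp [Complex.norm_real, abs_of_pos hR₀])
    exact le_trans (norm_nonneg _) this
  have hbound : ∀ z ∈ sphere (0 : ℂ) R₀,
      ‖(z⁻¹) ^ D * (z⁻¹ * F z)‖ ≤ (R₀⁻¹) ^ D * (R₀⁻¹ * M) := by
    intro z hz
    have hzR := hsphere z hz
    simp only [norm_mul, norm_pow, norm_inv, hzR]
    apply mul_le_mul_of_nonneg_left _ (by positivity)
    apply mul_le_mul_of_nonneg_left _ (by positivity)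
    exact hM z hzR
  have hnorm := circleIntegral.norm_integral_le_of_norm_le_const hR₀.le hbound
  have habs2pi : ‖(2 * (Real.pi : ℂ) * I)‖ = 2 * Real.pi := by
    rw [norm_mul, norm_mul, Complex.norm_two, Complex.norm_real, Real.norm_eq_abs, Complex.norm_I,
      _root_.abs_of_nonneg Real.pi_nonneg, mul_one]
  have hfinal : ‖b D‖ ≤ M * R₀ ^ (-(D : ℤ)) := by
    rw [hcoeff, norm_mul, norm_inv, habs2pi]
    calc (2 * Real.pi)⁻¹ * ‖∮ z in C(0, R₀), (z⁻¹) ^ D * (z⁻¹ * F z)‖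
        ≤ (2 * Real.pi)⁻¹ * (2 * Real.pi * R₀ * ((R₀⁻¹) ^ D * (R₀⁻¹ * M))) := by
          apply mul_le_mul_of_nonneg_left hnorm (by positivity)
      _ = M * R₀ ^ (-(D : ℤ)) := by
          rw [zpow_neg, zpow_natCast]
          field_simp
          rw [one_div, mul_right_comm, ← mul_pow, inv_mul_cancel₀ hR₀.ne', one_pow, one_mul]
  exact hfinal
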